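/- Let n ≥ 2 and let Δ ⊂ ℝ^n be the root system of the strange Lie superalgebra p(n), namely Δ := {ε_i − ε_j : i ≠ j} ∪ {±(ε_i + ε_j) : i < j} ∪ {2ε_i : 1 ≤ i ≤ n}. Consider P := {ε_i − ε_j : i < j} ∪ {ε_i + ε_j : i < j} ∪ {2ε_i : 1 ≤ i ≤ n} ⊆ Δ. Then: (a) under the identification of a linear functional Λ : ℝ^n → ℝ with the vector (Λ(ε₁), …, Λ(ε_n)) ∈ ℝ^n, the polyhedron F(P) := {Λ : Λ(α) ≥ 0 for all α ∈ P and Λ(α) < 0 for all α ∈ Δ ∖ P} equals {x ∈ ℝ^n : x₁ > x₂ > ⋯ > x_n ≥ 0}; in particular F(P) ≠ ∅ and P is a (principal) parabolic set of roots of Δ; (b) the Levi components of P, taken over all parabolic sets P̃ of Δ ∪ (−Δ) with P̃ ∩ Δ = P, are exactly the two sets ∅ and {2ε_n}. -/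

import Mathlib

open Pointwise

/-- A subset `Pt` of a symmetric set `Φ` (`Φ = -Φ`) is a parabolic set if it is proper,
`Φ = Pt ∪ (-Pt)`, and `Pt` is closed under sums lying in `Φ`. -/
def IsParabolicIn {V : Type*} [AddCommGroup V] (Φ Pt : Set V) : Prop :=
  Pt ⊂ Φ ∧ Φ = Pt ∪ (-Pt) ∧ ∀ α ∈ Pt, ∀ β ∈ Pt, α + β ∈ Φ → α + β ∈ Pt

/-- A proper subset `P` of `Δ` is a parabolic set of roots if `P = Pt ∩ Δ` for some
parabolic set `Pt` of `Δ ∪ (-Δ)`. -/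
def IsParabolicRoots {V : Type*} [AddCommGroup V] (Δ P : Set V) : Prop :=
  P ⊂ Δ ∧ ∃ Pt, IsParabolicIn (Δ ∪ -Δ) Pt ∧ P = Pt ∩ Δ

namespace Pn

variable {n : ℕ}

noncomputable def ε (i : Fin n) : Fin n → ℝ := Pi.single i 1

/-- The root system of the strange Lie superalgebra `p(n)`. -/
noncomputable def Δroot (n : ℕ) : Set (Fin n → ℝ) :=
  {v | ∃ i j : Fin n, i ≠ j ∧ v = ε i - ε j} ∪
  {v | ∃ i j : Fin n, i < j ∧ (v = ε i + ε j ∨ v = -(ε i + ε j))} ∪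
  {v | ∃ i : Fin n, v = (2 : ℝ) • ε i}

/-- The parabolic set `P`. -/
noncomputable def Ppar (n : ℕ) : Set (Fin n → ℝ) :=
  {v | ∃ i j : Fin n, i < j ∧ v = ε i - ε j} ∪
  {v | ∃ i j : Fin n, i < j ∧ v = ε i + ε j} ∪
  {v | ∃ i : Fin n, v = (2 : ℝ) • ε i}

/-- The polyhedron `F(P)`, with a linear functional `Λ` identified with the vector
`(Λ(ε₁), …, Λ(ε_n))`, so that `Λ(α) = Σᵢ xᵢ αᵢ`. -/
noncomputable def FP (n : ℕ) (P : Set (Fin n → ℝ)) : Set (Fin n → ℝ) :=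
  {x | (∀ α ∈ P, 0 ≤ ∑ i, x i * α i) ∧ (∀ α ∈ Δroot n \ P, (∑ i, x i * α i) < 0)}

end Pn

namespace Pn

variable {n : ℕ}

lemma sum_e (x : Fin n → ℝ) (i : Fin n) : ∑ k, x k * ε i k = x i := by
  simp [ε, Pi.single_apply, mul_ite]

lemma sum_sub_e (x : Fin n → ℝ) (i j : Fin n) :
    ∑ k, x k * (ε i - ε j) k = x i - x j := by
  simp [ε, Pi.single_apply, mul_ite, mul_sub, Finset.sum_sub_distrib]

lemma sum_add_e (x : Fin n → ℝ) (i j : Fin n) :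
    ∑ k, x k * (ε i + ε j) k = x i + x j := by
  simp [ε, Pi.single_apply, mul_ite, mul_add, Finset.sum_add_distrib]

lemma sum_two_e (x : Fin n → ℝ) (i : Fin n) :
    ∑ k, x k * ((2:ℝ) • ε i) k = 2 * x i := by
  simp [ε, Pi.single_apply, mul_ite, Finset.mul_sum]
  ring

lemma sum_neg (x v : Fin n → ℝ) : ∑ k, x k * (-v) k = -∑ k, x k * v k := by
  simp [mul_neg]

lemma sum_addv (x u v : Fin n → ℝ) :
    ∑ k, x k * (u + v) k = (∑ k, x k * u k) + ∑ k, x k * v k := by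
  simp [mul_add, Finset.sum_add_distrib]

/-- the strictly positive, strictly decreasing functional -/
noncomputable def yv (n : ℕ) (i : Fin n) : ℝ := (n : ℝ) - (i.val : ℝ)

/-- the functional vanishing exactly on the last coordinate root -/
noncomputable def x0 (n : ℕ) (i : Fin n) : ℝ := (n : ℝ) - 1 - (i.val : ℝ)

lemma cast_lt {i j : Fin n} (h : i < j) : (i.val : ℝ) < (j.val : ℝ) := by
  exact_mod_cast h

lemma yv_lt {i j : Fin n} (h : i < j) : yv n j < yv n i := by
  have := cast_lt h; simp only [yv]; linarith

lemma yv_pos (i : Fin n) : 0 < yv n i := by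
  have : (i.val : ℝ) < (n : ℝ) := by exact_mod_cast i.isLt
  simp only [yv]; linarith

lemma x0_lt {i j : Fin n} (h : i < j) : x0 n j < x0 n i := by
  have := cast_lt h; simp only [x0]; linarith

lemma x0_nonneg (i : Fin n) : 0 ≤ x0 n i := by
  have : (i.val : ℝ) ≤ (n : ℝ) - 1 := by
    have h1 : i.val ≤ n - 1 := by omega
    have h2 : ((n - 1 : ℕ) : ℝ) = (n : ℝ) - 1 := by
      have : 1 ≤ n := by omega
      push_cast [Nat.cast_sub this]; ring
    calc (i.val : ℝ) ≤ ((n - 1 : ℕ) : ℝ) := by exact_mod_cast h1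
      _ = (n : ℝ) - 1 := h2
  simp only [x0]; linarith

lemma x0_eq_zero_iff (i : Fin n) : x0 n i = 0 ↔ i.val = n - 1 := by
  constructor
  · intro h
    simp only [x0] at h
    have : (i.val : ℝ) = (n : ℝ) - 1 := by linarith
    have h2 : ((i.val : ℕ) : ℝ) = ((n - 1 : ℕ) : ℝ) := by
      have : 1 ≤ n := i.pos
      push_cast [Nat.cast_sub this]; linarith
    exact_mod_cast h2
  · intro h
    simp only [x0, h]
    have h1 : 1 ≤ n := i.pos
    push_cast [Nat.cast_sub h1]; ring

lemma x0_pos_of_ne {i : Fin n} (h : i.val ≠ n - 1) : 0 < x0 n i := by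
  rcases lt_or_eq_of_le (x0_nonneg i) with h' | h'
  · exact h'
  · exact absurd ((x0_eq_zero_iff i).mp h'.symm) h

-- membership intro lemmas
lemma memP₁ {i j : Fin n} (h : i < j) : ε i - ε j ∈ Ppar n :=
  Or.inl (Or.inl ⟨i, j, h, rfl⟩)

lemma memP₂ {i j : Fin n} (h : i < j) : ε i + ε j ∈ Ppar n :=
  Or.inl (Or.inr ⟨i, j, h, rfl⟩)

lemma memP₃ (i : Fin n) : (2:ℝ) • ε i ∈ Ppar n := Or.inr ⟨i, rfl⟩

lemma memΔ₁ {i j : Fin n} (h : i ≠ j) : ε i - ε j ∈ Δroot n :=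
  Or.inl (Or.inl ⟨i, j, h, rfl⟩)

lemma memΔ₂ {i j : Fin n} (h : i < j) : ε i + ε j ∈ Δroot n :=
  Or.inl (Or.inr ⟨i, j, h, Or.inl rfl⟩)

lemma memΔ₂' {i j : Fin n} (h : i < j) : -(ε i + ε j) ∈ Δroot n :=
  Or.inl (Or.inr ⟨i, j, h, Or.inr rfl⟩)

lemma memΔ₃ (i : Fin n) : (2:ℝ) • ε i ∈ Δroot n := Or.inr ⟨i, rfl⟩

lemma P_subset_Δ : Ppar n ⊆ Δroot n := by
  rintro v ((⟨i, j, hij, rfl⟩ | ⟨i, j, hij, rfl⟩) | ⟨i, rfl⟩)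
  · exact memΔ₁ hij.ne
  · exact memΔ₂ hij
  · exact memΔ₃ i

/-- key positivity: `yv` is strictly positive on `Ppar`. -/
lemma fy_pos {v : Fin n → ℝ} (hv : v ∈ Ppar n) : 0 < ∑ k, yv n k * v k := by
  rcases hv with (⟨i, j, hij, rfl⟩ | ⟨i, j, hij, rfl⟩) | ⟨i, rfl⟩
  · rw [sum_sub_e]; have := yv_lt hij; linarith
  · rw [sum_add_e]; have := yv_pos (n := n) i; have := yv_pos (n := n) j; linarith
  · rw [sum_two_e]; have := yv_pos (n := n) i; linarith

lemma not_memP_of_nonpos {v : Fin n → ℝ} (hv : ∑ k, yv n k * v k ≤ 0) : v ∉ Ppar n :=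
  fun h => absurd (fy_pos h) (by linarith)

lemma rev_not_memP {i j : Fin n} (h : i < j) : ε j - ε i ∉ Ppar n := by
  apply not_memP_of_nonpos
  rw [sum_sub_e]; have := yv_lt h; linarith

/-- every element of `Φ = Δ ∪ -Δ` is in `Δ` or is some `-2εᵢ`. -/
lemma phi_cases {v : Fin n → ℝ} (hv : v ∈ Δroot n ∪ -Δroot n) :
    v ∈ Δroot n ∨ ∃ i : Fin n, v = -((2:ℝ) • ε i) := by
  rcases hv with hv | hv
  · exact Or.inl hv
  · rw [Set.mem_neg] at hv
    rcases hv with (⟨i, j, hij, h⟩ | ⟨i, j, hij, h⟩) | ⟨i, h⟩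
    · left
      have hv2 : v = ε j - ε i := by rw [← neg_neg v, h]; abel
      rw [hv2]; exact memΔ₁ hij.symm
    · rcases h with h | h
      · left
        have hv2 : v = -(ε i + ε j) := by rw [← neg_neg v, h]
        rw [hv2]; exact memΔ₂' hij
      · left
        have hv2 : v = ε i + ε j := by rw [← neg_neg v, h, neg_neg]
        rw [hv2]; exact memΔ₂ hij
    · right
      exact ⟨i, by rw [← neg_neg v, h]⟩

lemma phi_eq_P_union_negP : Δroot n ∪ -Δroot n = Ppar n ∪ -Ppar n := by
  ext v
  constructor
  · intro hv
    have key : ∀ w, w ∈ Δroot n → w ∈ Ppar n ∪ -Ppar n := by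
      rintro w ((⟨i, j, hij, rfl⟩ | ⟨i, j, hij, (rfl | rfl)⟩) | ⟨i, rfl⟩)
      · rcases lt_or_gt_of_ne hij with h | h
        · exact Or.inl (memP₁ h)
        · refine Or.inr ?_
          rw [Set.mem_neg]
          have he : -(ε i - ε j) = ε j - ε i := by abel
          rw [he]; exact memP₁ h
      · exact Or.inl (memP₂ hij)
      · refine Or.inr ?_
        rw [Set.mem_neg, neg_neg]
        exact memP₂ hij
      · exact Or.inl (memP₃ i)
    rcases hv with hv | hv
    · exact key v hv
    · rw [Set.mem_neg] at hv
      rcases key _ hv with h | h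
      · exact Or.inr (Set.mem_neg.mpr h)
      · rw [Set.mem_neg, neg_neg] at h
        exact Or.inl h
  · rintro (hv | hv)
    · exact Or.inl (P_subset_Δ hv)
    · rw [Set.mem_neg] at hv
      right; rw [Set.mem_neg]; exact P_subset_Δ hv

/-- positive elements of `Φ` (w.r.t. `yv`) are in `Ppar`. -/
lemma memP_of_pos {v : Fin n → ℝ} (hv : v ∈ Δroot n ∪ -Δroot n)
    (hpos : 0 < ∑ k, yv n k * v k) : v ∈ Ppar n := by
  rcases phi_eq_P_union_negP ▸ hv with h | h
  · exact h
  · exfalso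
    rw [Set.mem_neg] at h
    have := fy_pos h
    rw [sum_neg] at this
    linarith

lemma P_inter_negP : Ppar n ∩ -Ppar n = (∅ : Set (Fin n → ℝ)) := by
  ext v
  simp only [Set.mem_inter_iff, Set.mem_neg, Set.mem_empty_iff_false, iff_false, not_and]
  intro h1 h2
  have := fy_pos h1
  have h3 := fy_pos h2
  rw [sum_neg] at h3
  linarith

/-- `Ppar` is parabolic in `Φ`. -/
lemma P_parabolic (hn : 2 ≤ n) : IsParabolicIn (Δroot n ∪ -Δroot n) (Ppar n) := by
  have h01 : (⟨0, by omega⟩ : Fin n) < ⟨1, by omega⟩ := by simp [Fin.lt_def]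
  refine ⟨⟨P_subset_Δ.trans Set.subset_union_left, ?_⟩, phi_eq_P_union_negP.trans ?_, ?_⟩
  · intro hsub
    exact rev_not_memP h01 (hsub (Or.inl (memΔ₁ h01.ne')))
  · ext v
    simp only [Set.mem_union]
  · intro α hα β hβ hs
    exact memP_of_pos hs (by rw [sum_addv]; have := fy_pos hα; have := fy_pos hβ; linarith)

end Pn

namespace Pn

variable {n : ℕ}

lemma last_lt_aux (hn : 2 ≤ n) : n - 1 < n := by omega

lemma FP_eq (hn : 2 ≤ n) :
    FP n (Ppar n) =
      {x : Fin n → ℝ | (∀ i j : Fin n, i < j → x j < x i) ∧ 0 ≤ x ⟨n - 1, last_lt_aux hn⟩} := by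
  ext x
  simp only [FP, Set.mem_setOf_eq, Set.mem_diff]
  constructor
  · rintro ⟨h1, h2⟩
    constructor
    · intro i j hij
      have hd := h2 (ε j - ε i) ⟨memΔ₁ hij.ne', rev_not_memP hij⟩
      rw [sum_sub_e] at hd
      linarith
    · have hh := h1 _ (memP₃ ⟨n - 1, by omega⟩)
      rw [sum_two_e] at hh
      linarith
  · rintro ⟨hdec, hlast⟩
    have hnn : ∀ i : Fin n, 0 ≤ x i := by
      intro i
      by_cases h : i = ⟨n - 1, by omega⟩
      · rw [h]; exact hlast
      · have hne : i.val ≠ n - 1 := fun hh => h (Fin.ext hh)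
        have hlt := i.isLt
        have hi : i < (⟨n - 1, by omega⟩ : Fin n) := by
          rw [Fin.lt_def]; simp only []; omega
        have := hdec _ _ hi
        linarith
    constructor
    · rintro α ((⟨i, j, hij, rfl⟩ | ⟨i, j, hij, rfl⟩) | ⟨i, rfl⟩)
      · rw [sum_sub_e]; have := hdec _ _ hij; linarith
      · rw [sum_add_e]; have := hnn i; have := hnn j; linarith
      · rw [sum_two_e]; have := hnn i; linarith
    · rintro α ⟨hΔ, hP⟩
      rcases hΔ with (⟨i, j, hij, rfl⟩ | ⟨i, j, hij, (rfl | rfl)⟩) | ⟨i, rfl⟩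
      · rcases lt_or_gt_of_ne hij with h | h
        · exact absurd (memP₁ h) hP
        · rw [sum_sub_e]; have := hdec _ _ h; linarith
      · exact absurd (memP₂ hij) hP
      · rw [sum_neg, sum_add_e]
        have h1 := hnn j
        have h2 := hdec _ _ hij
        linarith
      · exact absurd (memP₃ i) hP

lemma x0_mem (hn : 2 ≤ n) : x0 n ∈ FP n (Ppar n) := by
  rw [FP_eq hn]
  refine ⟨fun i j hij => x0_lt hij, le_of_eq ?_⟩
  exact ((x0_eq_zero_iff _).mpr rfl).symm

lemma P_parabolicRoots (hn : 2 ≤ n) : IsParabolicRoots (Δroot n) (Ppar n) := by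
  have h01 : (⟨0, by omega⟩ : Fin n) < ⟨1, by omega⟩ := by
    rw [Fin.lt_def]; norm_num
  exact ⟨⟨P_subset_Δ, fun hsub => rev_not_memP h01 (hsub (memΔ₁ h01.ne'))⟩,
    Ppar n, P_parabolic hn, (Set.inter_eq_left.mpr P_subset_Δ).symm⟩

lemma neg_two_not_mem_Δ (i : Fin n) : -((2:ℝ) • ε i) ∉ Δroot n := by
  rintro ((⟨a, b, hab, h⟩ | ⟨a, b, hab, (h | h)⟩) | ⟨a, h⟩)
  · have hb := congrFun h b
    simp [ε, Pi.single_apply] at hb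
    split_ifs at hb <;> simp_all <;> norm_num at hb
  · have hb := congrFun h b
    simp [ε, Pi.single_apply] at hb
    split_ifs at hb <;> simp_all <;> norm_num at hb
  · have hb := congrFun h a
    simp [ε, Pi.single_apply] at hb
    split_ifs at hb <;> simp_all <;> norm_num at hb
  · have hb := congrFun h a
    simp [ε, Pi.single_apply] at hb
    split_ifs at hb <;> simp_all <;> norm_num at hb

lemma phi_neg_mem {v : Fin n → ℝ} (h : -v ∈ Δroot n ∪ -Δroot n) :
    v ∈ Δroot n ∪ -Δroot n := by
  rcases h with h | h
  · exact Or.inr (Set.mem_neg.mpr h)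
  · rw [Set.mem_neg, neg_neg] at h
    exact Or.inl h

lemma neg_two_mem_imp (hn : 2 ≤ n) {Pt : Set (Fin n → ℝ)}
    (hpar : IsParabolicIn (Δroot n ∪ -Δroot n) Pt) (hPtΔ : Pt ∩ Δroot n = Ppar n)
    {i : Fin n} (hi : -((2:ℝ) • ε i) ∈ Pt) : i.val = n - 1 := by
  by_contra h
  have hlt := i.isLt
  have hilt : i < (⟨n - 1, by omega⟩ : Fin n) := by
    rw [Fin.lt_def]; simp only []; omega
  set j : Fin n := ⟨n - 1, by omega⟩ with hj
  have hβ : ε i + ε j ∈ Pt := by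
    have h2 : ε i + ε j ∈ Ppar n := memP₂ hilt
    rw [← hPtΔ] at h2; exact h2.1
  have hsum : -((2:ℝ) • ε i) + (ε i + ε j) = ε j - ε i := by
    have h2 : (2:ℝ) • ε i = ε i + ε i := two_smul ℝ (ε i)
    rw [h2]; abel
  have hmem : -((2:ℝ) • ε i) + (ε i + ε j) ∈ Δroot n ∪ -Δroot n := by
    rw [hsum]; exact Or.inl (memΔ₁ hilt.ne')
  have hcl := hpar.2.2 _ hi _ hβ hmem
  rw [hsum] at hcl
  have hfin : ε j - ε i ∈ Ppar n := by
    rw [← hPtΔ]; exact ⟨hcl, memΔ₁ hilt.ne'⟩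
  exact rev_not_memP hilt hfin

lemma Pt1_parabolic (hn : 2 ≤ n) :
    IsParabolicIn (Δroot n ∪ -Δroot n)
      (Ppar n ∪ {-((2:ℝ) • ε (⟨n - 1, last_lt_aux hn⟩ : Fin n))}) := by
  set l : Fin n := ⟨n - 1, by omega⟩ with hl
  have hx0l : x0 n l = 0 := (x0_eq_zero_iff _).mpr rfl
  have hsub : Ppar n ∪ {-((2:ℝ) • ε l)} ⊆ Δroot n ∪ -Δroot n := by
    rintro v (hv | hv)
    · exact Or.inl (P_subset_Δ hv)
    · rw [Set.mem_singleton_iff] at hv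
      subst hv
      exact Or.inr (Set.mem_neg.mpr (by rw [neg_neg]; exact memΔ₃ l))
  have h01 : (⟨0, by omega⟩ : Fin n) < ⟨1, by omega⟩ := by
    rw [Fin.lt_def]; norm_num
  refine ⟨⟨hsub, ?_⟩, ?_, ?_⟩
  · -- proper
    intro hsub2
    have hw : ε (⟨1, by omega⟩ : Fin n) - ε ⟨0, by omega⟩ ∈ Δroot n ∪ -Δroot n :=
      Or.inl (memΔ₁ h01.ne')
    rcases hsub2 hw with h | h
    · exact rev_not_memP h01 h
    · rw [Set.mem_singleton_iff] at h
      have hval := congrArg (fun v => ∑ k, x0 n k * v k) h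
      simp only [sum_sub_e, sum_neg, sum_two_e, hx0l] at hval
      have h1 : x0 n (⟨1, by omega⟩ : Fin n) < x0 n ⟨0, by omega⟩ := x0_lt h01
      linarith
  · -- union
    apply Set.Subset.antisymm
    · intro v hv
      rcases phi_eq_P_union_negP ▸ hv with h | h
      · exact Or.inl (Or.inl h)
      · exact Or.inr (Set.mem_neg.mpr (Or.inl (Set.mem_neg.mp h)))
    · rintro v (hv | hv)
      · exact hsub hv
      · exact phi_neg_mem (hsub (Set.mem_neg.mp hv))
  · -- closed under sums
    have key1 : ∀ α ∈ Ppar n ∪ {-((2:ℝ) • ε l)}, 0 ≤ ∑ k, x0 n k * α k := by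
      rintro α (hα | hα)
      · exact (x0_mem hn).1 α hα
      · rw [Set.mem_singleton_iff] at hα
        subst hα
        rw [sum_neg, sum_two_e, hx0l]; norm_num
    intro α hα β hβ hs
    have hsval : 0 ≤ ∑ k, x0 n k * (α + β) k := by
      rw [sum_addv]
      have := key1 α hα; have := key1 β hβ; linarith
    rcases phi_cases hs with h | ⟨i, h⟩
    · by_cases hp : α + β ∈ Ppar n
      · exact Or.inl hp
      · exact absurd ((x0_mem hn).2 _ ⟨h, hp⟩) (by linarith)
    · rw [h] at hsval ⊢
      rw [sum_neg, sum_two_e] at hsval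
      have h0 : x0 n i = 0 := le_antisymm (by linarith) (x0_nonneg i)
      have : i = l := Fin.ext ((x0_eq_zero_iff i).mp h0)
      rw [this]
      exact Or.inr rfl

end Pn

theorem stmt_19 (n : ℕ) (hn : 2 ≤ n) :
    -- (a)
    (Pn.FP n (Pn.Ppar n) =
      {x : Fin n → ℝ | (∀ i j : Fin n, i < j → x j < x i) ∧ 0 ≤ x ⟨n - 1, by omega⟩} ∧
     (Pn.FP n (Pn.Ppar n)).Nonempty ∧
     IsParabolicRoots (Pn.Δroot n) (Pn.Ppar n)) ∧
    -- (b)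
    ({L : Set (Fin n → ℝ) |
        ∃ Pt, IsParabolicIn (Pn.Δroot n ∪ -Pn.Δroot n) Pt ∧ Pt ∩ Pn.Δroot n = Pn.Ppar n ∧
          L = Pt ∩ (-Pt) ∩ Pn.Δroot n} =
      {∅, {(2 : ℝ) • Pn.ε ⟨n - 1, by omega⟩}}) := by
  have hFP := Pn.FP_eq hn
  refine ⟨⟨hFP, ⟨Pn.x0 n, Pn.x0_mem hn⟩, Pn.P_parabolicRoots hn⟩, ?_⟩
  set l : Fin n := ⟨n - 1, by omega⟩ with hl
  ext L
  simp only [Set.mem_setOf_eq, Set.mem_insert_iff, Set.mem_singleton_iff]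
  constructor
  · rintro ⟨Pt, hpar, hPtΔ, rfl⟩
    by_cases hmem : -((2:ℝ) • Pn.ε l) ∈ Pt
    · right
      ext v
      simp only [Set.mem_inter_iff, Set.mem_singleton_iff]
      constructor
      · rintro ⟨⟨hv1, hv2⟩, hv3⟩
        have hvP : v ∈ Pn.Ppar n := by
          have h := Set.mem_inter hv1 hv3
          rwa [hPtΔ] at h
        have hnegv : -v ∈ Pt := Set.mem_neg.mp hv2
        rcases Pn.phi_cases (hpar.1.1 hnegv) with h | ⟨i, h⟩
        · exfalso
          have hP2 : -v ∈ Pn.Ppar n := by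
            have h2 := Set.mem_inter hnegv h
            rwa [hPtΔ] at h2
          have h1 := Pn.fy_pos hvP
          have h2 := Pn.fy_pos hP2
          rw [Pn.sum_neg] at h2; linarith
        · have hi : i = l := Fin.ext (Pn.neg_two_mem_imp hn hpar hPtΔ (h ▸ hnegv))
          have hv' : v = (2:ℝ) • Pn.ε i := by rw [← neg_neg v, h, neg_neg]
          rw [hv', hi]
      · rintro rfl
        refine ⟨⟨?_, Set.mem_neg.mpr hmem⟩, Pn.memΔ₃ l⟩
        have h2 : (2:ℝ) • Pn.ε l ∈ Pt ∩ Pn.Δroot n := by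
          rw [hPtΔ]; exact Pn.memP₃ l
        exact h2.1
    · left
      have hPt : Pt = Pn.Ppar n := by
        apply Set.Subset.antisymm
        · intro v hv
          rcases Pn.phi_cases (hpar.1.1 hv) with h | ⟨i, h⟩
          · have h2 := Set.mem_inter hv h
            rwa [hPtΔ] at h2
          · exfalso
            have hi : i = l := Fin.ext (Pn.neg_two_mem_imp hn hpar hPtΔ (h ▸ hv))
            rw [hi] at h
            exact hmem (h ▸ hv)
        · intro v hv
          have h2 : v ∈ Pt ∩ Pn.Δroot n := by rw [hPtΔ]; exact hv
          exact h2.1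
      rw [hPt, Pn.P_inter_negP, Set.empty_inter]
  · rintro (rfl | rfl)
    · exact ⟨Pn.Ppar n, Pn.P_parabolic hn, Set.inter_eq_left.mpr Pn.P_subset_Δ,
        by rw [Pn.P_inter_negP, Set.empty_inter]⟩
    · refine ⟨Pn.Ppar n ∪ {-((2:ℝ) • Pn.ε l)}, Pn.Pt1_parabolic hn, ?_, ?_⟩
      · apply Set.Subset.antisymm
        · rintro v ⟨(hv | hv), hΔ⟩
          · exact hv
          · rw [Set.mem_singleton_iff] at hv
            exact absurd (hv ▸ hΔ) (Pn.neg_two_not_mem_Δ l)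
        · intro v hv
          exact ⟨Or.inl hv, Pn.P_subset_Δ hv⟩
      · ext v
        simp only [Set.mem_inter_iff, Set.mem_singleton_iff, Set.mem_union]
        constructor
        · rintro rfl
          refine ⟨⟨Or.inl (Pn.memP₃ l), ?_⟩, Pn.memΔ₃ l⟩
          exact Set.mem_neg.mpr (Or.inr rfl)
        · rintro ⟨⟨hv1, hv2⟩, hv3⟩
          rcases hv1 with hv1 | hv1
          · rcases Set.mem_neg.mp hv2 with h | h
            · exfalso
              have h1 := Pn.fy_pos hv1
              have h2 := Pn.fy_pos h
              rw [Pn.sum_neg] at h2; linarith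
            · rw [Set.mem_singleton_iff] at h
              rw [← neg_neg v, h, neg_neg]
          · exact absurd (hv1 ▸ hv3) (Pn.neg_two_not_mem_Δ l)
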